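/- Let F = ℂ⟨v₁,…,v_N⟩ be the free associative ℂ-algebra with generator v_k assigned degree d_k ≥ 1, and let e₁,…,e_p be pairwise non-overlapping words in the letters v₁,…,v_N, with deg e_j the sum of the degrees of the letters of e_j. Let J be the two-sided ideal generated by e₁,…,e_p and A = F/J with the induced grading, a_m = dim_ℂ A[m]. Then in ℤ[[t]]: (Σ_{m≥0} a_m t^m) · (1 − Σ_{k=1}^{N} t^{d_k} + Σ_{j=1}^{p} t^{deg e_j}) = 1. -/

import Mathlib

noncomputable section

/-- The product in the free algebra of the generators listed by `l`. -/
def wordProd {X : Type*} (l : List X) : FreeAlgebra ℂ X :=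
  (l.map (FreeAlgebra.ι ℂ)).prod

/-- The weight-`m` graded component of the free algebra (generator `k` of degree `d k`). -/
def wt {X : Type*} (d : X → ℕ) (m : ℕ) : Submodule ℂ (FreeAlgebra ℂ X) :=
  Submodule.span ℂ {x | ∃ l : List X, (l.map d).sum = m ∧ x = wordProd l}

/-- A family of (nonempty) words is pairwise non-overlapping (strongly free) if no word is a
contiguous subword of a different one, and no proper nonempty suffix of one equals a proper
nonempty prefix of another (including of itself). -/
def PairwiseNonOverlapping {X : Type*} {p : ℕ} (w : Fin p → List X) : Prop :=
  (∀ i j : Fin p, i ≠ j → ¬ (w i <:+: w j)) ∧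
    (∀ i j : Fin p, ∀ u : List X,
      u ≠ [] → u <:+ w i → u ≠ w i → u <+: w j → u ≠ w j → False)


theorem myinfix_append_split {α : Type*} {x a b : List α} (h : x <:+: a ++ b) :
    x <:+: a ∨ x <:+: b ∨ ∃ x₁ x₂, x = x₁ ++ x₂ ∧ x₁ ≠ [] ∧ x₂ ≠ [] ∧ x₁ <:+ a ∧ x₂ <+: b := by
  obtain ⟨s, t, h⟩ := h
  rcases le_or_gt (s.length + x.length) a.length with hle | hgt
  · left
    have h1 : s ++ (x ++ t) = a ++ b := by simpa [List.append_assoc] using h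
    have hsa : s.length ≤ a.length := le_trans (Nat.le_add_right _ _) hle
    have h2 : x ++ t = a.drop s.length ++ b := by
      have := congrArg (List.drop s.length) h1
      rwa [List.drop_left, List.drop_append,
        Nat.sub_eq_zero_of_le hsa, List.drop_zero] at this
    have hx : x <+: a.drop s.length := by
      refine List.prefix_of_prefix_length_le ⟨t, h2⟩ (List.prefix_append _ _) ?_
      simp only [List.length_drop]; omega
    exact hx.isInfix.trans (List.drop_suffix _ _).isInfix
  rcases le_or_gt a.length s.length with hle2 | hgt2
  · right; left
    have has : a <+: s := by
      refine List.prefix_of_prefix_length_le ⟨b, rfl⟩ ⟨x ++ t, ?_⟩ hle2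
      simpa [List.append_assoc] using h
    obtain ⟨s', rfl⟩ := has
    refine ⟨s', t, ?_⟩
    have : a ++ (s' ++ x ++ t) = a ++ b := by simpa [List.append_assoc] using h
    simpa [List.append_assoc] using List.append_cancel_left this
  · right; right
    have h1 : s ++ (x ++ t) = a ++ b := by simpa [List.append_assoc] using h
    have hxa : a = s ++ x.take (a.length - s.length) := by
      have := congrArg (List.take a.length) h1
      rw [List.take_append, List.take_of_length_le hgt2.le,
        List.take_append,
        Nat.sub_eq_zero_of_le (show a.length - s.length ≤ x.length by omega), List.take_zero,
        List.append_nil, List.take_left] at this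
      exact this.symm
    have hxb : b = x.drop (a.length - s.length) ++ t := by
      have := congrArg (List.drop a.length) h1
      rw [List.drop_append, List.drop_of_length_le hgt2.le, List.nil_append,
        List.drop_append,
        Nat.sub_eq_zero_of_le (show a.length - s.length ≤ x.length by omega), List.drop_zero,
        List.drop_left] at this
      exact this.symm
    refine ⟨x.take (a.length - s.length), x.drop (a.length - s.length),
      (List.take_append_drop _ _).symm, ?_, ?_, ⟨s, hxa.symm⟩, ⟨t, hxb.symm⟩⟩
    · refine List.ne_nil_of_length_pos ?_
      rw [List.length_take]; omega
    · refine List.ne_nil_of_length_pos ?_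
      rw [List.length_drop]; omega

section Comb

variable {N p : ℕ} (d : Fin N → ℕ) (w : Fin p → List (Fin N))

/-- `l` avoids all the words `w j`. -/
def NGood (l : List (Fin N)) : Prop := ∀ j, ¬ (w j <:+: l)

lemma NGood.of_infix {l u : List (Fin N)} (h : NGood w l) (hu : u <:+: l) : NGood w u :=
  fun j hj => h j (hj.trans hu)

lemma length_le_wsum (hd : ∀ k, 1 ≤ d k) (l : List (Fin N)) : l.length ≤ (l.map d).sum := by
  induction l with
  | nil => simp
  | cons a l ih => have := hd a; simp only [List.map_cons, List.sum_cons, List.length_cons]; omega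

lemma finite_wsum (hd : ∀ k, 1 ≤ d k) (P : List (Fin N) → Prop) (n : ℕ) :
    {l : List (Fin N) | (l.map d).sum = n ∧ P l}.Finite :=
  (List.finite_length_le (Fin N) n).subset fun l hl => by
    have := length_le_wsum d hd l
    simp only [Set.mem_setOf_eq] at hl ⊢
    omega

/-- Finset of good words of weight `n`. -/
noncomputable def goodF (hd : ∀ k, 1 ≤ d k) (n : ℕ) : Finset (List (Fin N)) :=
  (finite_wsum d hd (NGood w) n).toFinset

/-- Finset of nonempty words of weight `n` whose `dropLast` is good. -/
noncomputable def aF (hd : ∀ k, 1 ≤ d k) (n : ℕ) : Finset (List (Fin N)) :=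
  (finite_wsum d hd (fun l => l ≠ [] ∧ NGood w l.dropLast) n).toFinset

/-- Finset of nonempty bad words of weight `n` whose `dropLast` is good. -/
noncomputable def bF (hd : ∀ k, 1 ≤ d k) (n : ℕ) : Finset (List (Fin N)) :=
  (finite_wsum d hd (fun l => l ≠ [] ∧ NGood w l.dropLast ∧ ¬ NGood w l) n).toFinset

/-- Finset of nonempty good words of weight `n`. -/
noncomputable def gnF (hd : ∀ k, 1 ≤ d k) (n : ℕ) : Finset (List (Fin N)) :=
  (finite_wsum d hd (fun l => l ≠ [] ∧ NGood w l) n).toFinset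

lemma wsum_append (u v : List (Fin N)) :
    ((u ++ v).map d).sum = (u.map d).sum + (v.map d).sum := by
  simp

variable (hd : ∀ k, 1 ≤ d k)

lemma card_aF (n : ℕ) :
    (aF d w hd n).card = ∑ k : Fin N, (if d k ≤ n then (goodF d w hd (n - d k)).card else 0) := by
  classical
  have key : ∀ k : Fin N, (if d k ≤ n then (goodF d w hd (n - d k)).card else 0)
      = (if d k ≤ n then goodF d w hd (n - d k) else (∅ : Finset (List (Fin N)))).card := by
    intro k; split <;> simp
  rw [Finset.sum_congr rfl fun k _ => key k, ← Finset.card_sigma]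
  refine Finset.card_bij' (fun l hl => ?_) (fun (q : (_ : Fin N) × List (Fin N)) _ => q.2 ++ [q.1])
    ?_ ?_ ?_ ?_
  · -- forward map
    have hne : l ≠ [] := by
      simp only [aF, Set.Finite.mem_toFinset, Set.mem_setOf_eq] at hl; exact hl.2.1
    exact ⟨l.getLast hne, l.dropLast⟩
  · -- forward mem
    intro l hl
    simp only [aF, Set.Finite.mem_toFinset, Set.mem_setOf_eq] at hl
    obtain ⟨hsum, hne, hgd⟩ := hl
    have hrec : l.dropLast ++ [l.getLast hne] = l := List.dropLast_concat_getLast hne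
    have hsum' : (l.dropLast.map d).sum + d (l.getLast hne) = n := by
      have h2 := wsum_append d l.dropLast [l.getLast hne]
      rw [hrec] at h2; simp only [List.map_cons, List.map_nil, List.sum_cons, List.sum_nil,
        Nat.add_zero] at h2; omega
    simp only [Finset.mem_sigma, Finset.mem_univ, true_and]
    rw [if_pos (by omega)]
    simp only [goodF, Set.Finite.mem_toFinset, Set.mem_setOf_eq]
    exact ⟨by omega, hgd⟩
  · -- backward mem
    intro q hq
    simp only [Finset.mem_sigma, Finset.mem_univ, true_and] at hq
    by_cases hk : d q.1 ≤ n
    · rw [if_pos hk] at hq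
      simp only [goodF, Set.Finite.mem_toFinset, Set.mem_setOf_eq] at hq
      simp only [aF, Set.Finite.mem_toFinset, Set.mem_setOf_eq]
      refine ⟨?_, by simp, by simpa using hq.2⟩
      rw [wsum_append]; simp [hq.1]; omega
    · rw [if_neg hk] at hq; simp at hq
  · intro l hl
    have hne : l ≠ [] := by
      simp only [aF, Set.Finite.mem_toFinset, Set.mem_setOf_eq] at hl; exact hl.2.1
    exact List.dropLast_concat_getLast hne
  · intro q hq
    ext
    · simp [List.getLast_append_singleton]
    · simp

end Comb

section Comb2

variable {N p : ℕ} (d : Fin N → ℕ) (w : Fin p → List (Fin N))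
  (hd : ∀ k, 1 ≤ d k) (hw : ∀ j, w j ≠ []) (hno : PairwiseNonOverlapping w)

include hw hno

lemma ngood_append_dropLast {u : List (Fin N)} (hu : NGood w u) (j : Fin p) :
    NGood w (u ++ w j).dropLast := by
  intro i hi
  rw [List.dropLast_append_of_ne_nil (hw j)] at hi
  rcases myinfix_append_split hi with h | h | ⟨x₁, x₂, hx, h1, h2, h3, h4⟩
  · exact hu i h
  · have hlen : (w i).length ≤ (w j).length - 1 := by simpa using h.length_le
    by_cases hij : i = j
    · subst hij
      have : 1 ≤ (w i).length := List.length_pos_iff.mpr (hw i)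
      omega
    · exact hno.1 i j hij (h.trans (List.dropLast_prefix _).isInfix)
  · refine hno.2 i j x₂ h2 ?_ ?_ (h4.trans (List.dropLast_prefix _)) ?_
    · rw [hx]; exact List.suffix_append _ _
    · intro he
      apply h1
      have hlen := congrArg List.length hx
      rw [← he] at hlen
      simp only [List.length_append] at hlen
      exact List.eq_nil_of_length_eq_zero (by omega)
    · intro he
      have hle := h4.length_le
      have h5 : 1 ≤ (w j).length := List.length_pos_iff.mpr (hw j)
      rw [he] at hle
      simp only [List.length_dropLast] at hle
      omega

omit hno in
lemma bad_decomp {l : List (Fin N)} (hgdl : NGood w l.dropLast) (hbad : ¬ NGood w l) :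
    ∃ j u, u ++ w j = l ∧ NGood w u := by
  rw [NGood, not_forall] at hbad
  obtain ⟨j, hj⟩ := hbad
  rw [not_not] at hj
  obtain ⟨s, t, hst⟩ := hj
  have ht : t = [] := by
    by_contra ht
    refine hgdl j ⟨s, t.dropLast, ?_⟩
    rw [← hst, List.append_assoc, List.dropLast_append_of_ne_nil ht, ← List.append_assoc]
  subst ht
  rw [List.append_nil] at hst
  refine ⟨j, s, hst, ?_⟩
  have hpre : s <+: l.dropLast := by
    rw [← hst, List.dropLast_append_of_ne_nil (hw j)]
    exact List.prefix_append _ _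
  exact NGood.of_infix w hgdl hpre.isInfix

omit hw in
lemma suffix_unique {l : List (Fin N)} {i j : Fin p} (hi : w i <:+ l) (hj : w j <:+ l) :
    i = j := by
  by_contra hij
  rcases List.suffix_or_suffix_of_suffix hi hj with h | h
  · exact hno.1 i j hij h.isInfix
  · exact hno.1 j i (Ne.symm hij) h.isInfix

lemma card_bF (n : ℕ) :
    (bF d w hd n).card = ∑ j : Fin p,
      (if ((w j).map d).sum ≤ n then (goodF d w hd (n - ((w j).map d).sum)).card else 0) := by
  classical
  have key : ∀ j : Fin p, (if ((w j).map d).sum ≤ n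
        then (goodF d w hd (n - ((w j).map d).sum)).card else 0)
      = (if ((w j).map d).sum ≤ n then goodF d w hd (n - ((w j).map d).sum)
          else (∅ : Finset (List (Fin N)))).card := by
    intro j; split <;> simp
  rw [Finset.sum_congr rfl fun j _ => key j, ← Finset.card_sigma]
  refine (Finset.card_bij (fun (q : (_ : Fin p) × List (Fin N)) _ => q.2 ++ w q.1) ?_ ?_ ?_).symm
  · intro q hq
    simp only [Finset.mem_sigma, Finset.mem_univ, true_and] at hq
    by_cases hD : ((w q.1).map d).sum ≤ n
    · rw [if_pos hD] at hq
      simp only [goodF, Set.Finite.mem_toFinset, Set.mem_setOf_eq] at hq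
      simp only [bF, Set.Finite.mem_toFinset, Set.mem_setOf_eq]
      refine ⟨by rw [wsum_append]; omega, fun hc => hw q.1 (List.append_eq_nil_iff.mp hc).2, ?_, ?_⟩
      · exact ngood_append_dropLast w hw hno hq.2 q.1
      · intro hg; exact hg q.1 (List.suffix_append _ _).isInfix
    · rw [if_neg hD] at hq; simp at hq
  · intro q hq q' hq' heq
    obtain ⟨j, u⟩ := q; obtain ⟨j', u'⟩ := q'
    have heq' : u ++ w j = u' ++ w j' := heq
    have hjj : j = j' := by
      refine suffix_unique w hno (⟨u, rfl⟩ : w j <:+ u ++ w j) ?_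
      rw [heq']; exact ⟨u', rfl⟩
    subst hjj
    have huu : u = u' := List.append_cancel_right heq'
    rw [huu]
  · intro l hl
    simp only [bF, Set.Finite.mem_toFinset, Set.mem_setOf_eq] at hl
    obtain ⟨hsum, hne, hgdl, hbad⟩ := hl
    obtain ⟨j, u, hul, hu⟩ := bad_decomp w hw hgdl hbad
    have hws := wsum_append d u (w j)
    rw [hul] at hws
    refine ⟨⟨j, u⟩, ?_, hul⟩
    simp only [Finset.mem_sigma, Finset.mem_univ, true_and]
    rw [if_pos (by omega)]
    simp only [goodF, Set.Finite.mem_toFinset, Set.mem_setOf_eq]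
    exact ⟨by omega, hu⟩

omit hw hno in
lemma card_aF_split (n : ℕ) :
    (aF d w hd n).card = (gnF d w hd n).card + (bF d w hd n).card := by
  classical
  have hu : aF d w hd n = gnF d w hd n ∪ bF d w hd n := by
    ext l
    simp only [aF, gnF, bF, Set.Finite.mem_toFinset, Set.mem_setOf_eq, Finset.mem_union]
    constructor
    · rintro ⟨hs, hne, hgd⟩
      by_cases hg : NGood w l
      · exact Or.inl ⟨hs, hne, hg⟩
      · exact Or.inr ⟨hs, hne, hgd, hg⟩
    · rintro (⟨hs, hne, hg⟩ | ⟨hs, hne, hgd, _⟩)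
      · exact ⟨hs, hne, NGood.of_infix w hg (List.dropLast_prefix l).isInfix⟩
      · exact ⟨hs, hne, hgd⟩
  have hdisj : Disjoint (gnF d w hd n) (bF d w hd n) := by
    rw [Finset.disjoint_left]
    intro l hl hl'
    simp only [gnF, bF, Set.Finite.mem_toFinset, Set.mem_setOf_eq] at hl hl'
    exact hl'.2.2.2 hl.2.2
  rw [hu, Finset.card_union_of_disjoint hdisj]

omit hno in
lemma card_goodF_split (n : ℕ) :
    (goodF d w hd n).card = (gnF d w hd n).card + (if n = 0 then 1 else 0) := by
  classical
  split_ifs with h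
  · subst h
    have hg : goodF d w hd 0 = {[]} := by
      ext l
      simp only [goodF, Set.Finite.mem_toFinset, Set.mem_setOf_eq, Finset.mem_singleton]
      constructor
      · rintro ⟨hs, -⟩
        have := length_le_wsum d hd l
        exact List.eq_nil_of_length_eq_zero (by omega)
      · rintro rfl
        refine ⟨by simp, fun j hj => hw j ?_⟩
        rcases hj with ⟨s, t, hst⟩
        have hlen := congrArg List.length hst
        simp only [List.length_append, List.length_nil] at hlen
        exact List.eq_nil_of_length_eq_zero (by omega)
    have hgn : gnF d w hd 0 = ∅ := by
      ext l
      simp only [gnF, Set.Finite.mem_toFinset, Set.mem_setOf_eq, Finset.notMem_empty,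
        iff_false, not_and]
      intro hs hne
      have := length_le_wsum d hd l
      exact (hne (List.eq_nil_of_length_eq_zero (by omega))).elim
    simp [hg, hgn]
  · have heq : goodF d w hd n = gnF d w hd n := by
      ext l
      simp only [goodF, gnF, Set.Finite.mem_toFinset, Set.mem_setOf_eq]
      constructor
      · rintro ⟨hs, hg⟩
        refine ⟨hs, ?_, hg⟩
        rintro rfl
        simp at hs
        exact h hs.symm
      · rintro ⟨hs, -, hg⟩; exact ⟨hs, hg⟩
    simp [heq]

lemma comb_key (n : ℕ) :
    (goodF d w hd n).card
        + ∑ j : Fin p, (if ((w j).map d).sum ≤ n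
            then (goodF d w hd (n - ((w j).map d).sum)).card else 0)
      = ∑ k : Fin N, (if d k ≤ n then (goodF d w hd (n - d k)).card else 0)
        + (if n = 0 then 1 else 0) := by
  rw [card_goodF_split d w hd hw, ← card_bF d w hd hw hno, ← card_aF d w hd,
    card_aF_split d w hd]
  omega

end Comb2
section Alg

variable {X : Type*}

@[simp] lemma wordProd_nil : wordProd ([] : List X) = 1 := rfl

lemma wordProd_cons (a : X) (l : List X) :
    wordProd (a :: l) = FreeAlgebra.ι ℂ a * wordProd l := by
  simp [wordProd]

lemma wordProd_append (u v : List X) : wordProd (u ++ v) = wordProd u * wordProd v := by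
  simp [wordProd]

abbrev Emap : FreeAlgebra ℂ X ≃ₐ[ℂ] MonoidAlgebra ℂ (FreeMonoid X) :=
  FreeAlgebra.equivMonoidAlgebraFreeMonoid (R := ℂ) (X := X)

lemma Emap_wordProd (l : List X) :
    Emap (wordProd l) = MonoidAlgebra.single (FreeMonoid.ofList l) 1 := by
  induction l with
  | nil => simp [MonoidAlgebra.one_def, FreeMonoid.ofList_nil]
  | cons a l ih =>
    rw [wordProd_cons, map_mul, ih, FreeMonoid.ofList_cons]
    show Emap (FreeAlgebra.ι ℂ a) * _ = _
    rw [show Emap (FreeAlgebra.ι ℂ a) = MonoidAlgebra.single (FreeMonoid.of a) 1 from ?_,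
      MonoidAlgebra.single_mul_single, one_mul]
    simp [Emap, FreeAlgebra.equivMonoidAlgebraFreeMonoid]

end Alg

section Ker

variable {N p : ℕ} (w : Fin p → List (Fin N))

/-- The monomial relation. -/
abbrev mrel : FreeAlgebra ℂ (Fin N) → FreeAlgebra ℂ (Fin N) → Prop :=
  fun a b => (∃ j, a = wordProd (w j)) ∧ b = 0

/-- The span of the bad words. -/
def Bspan : Submodule ℂ (FreeAlgebra ℂ (Fin N)) :=
  Submodule.span ℂ {x | ∃ l : List (Fin N), (∃ j, w j <:+: l) ∧ x = wordProd l}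

lemma span_words_top :
    Submodule.span ℂ (Set.range (wordProd : List (Fin N) → FreeAlgebra ℂ (Fin N))) = ⊤ := by
  rw [Submodule.eq_top_iff']
  intro x
  induction x using FreeAlgebra.induction with
  | grade0 r =>
    rw [Algebra.algebraMap_eq_smul_one]
    exact Submodule.smul_mem _ _ (Submodule.subset_span ⟨[], rfl⟩)
  | grade1 x => exact Submodule.subset_span ⟨[x], by simp [wordProd]⟩
  | add a b ha hb => exact add_mem ha hb
  | mul a b ha hb =>
    induction ha using Submodule.span_induction with
    | mem u hu =>
      obtain ⟨lu, rfl⟩ := hu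
      induction hb using Submodule.span_induction with
      | mem v hv =>
        obtain ⟨lv, rfl⟩ := hv
        exact Submodule.subset_span ⟨lu ++ lv, wordProd_append lu lv⟩
      | zero => rw [mul_zero]; exact zero_mem _
      | add y z _ _ hy hz => rw [mul_add]; exact add_mem hy hz
      | smul c y _ hy => rw [mul_smul_comm]; exact Submodule.smul_mem _ _ hy
    | zero => rw [zero_mul]; exact zero_mem _
    | add y z _ _ hy hz => rw [add_mul]; exact add_mem hy hz
    | smul c y _ hy => rw [smul_mul_assoc]; exact Submodule.smul_mem _ _ hy

lemma word_mul_mem_Bspan {l : List (Fin N)} (hl : ∃ j, w j <:+: l) (y : FreeAlgebra ℂ (Fin N)) :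
    y * wordProd l ∈ Bspan w ∧ wordProd l * y ∈ Bspan w := by
  have hy : y ∈ Submodule.span ℂ (Set.range (wordProd : List (Fin N) → _)) := by
    rw [span_words_top]; trivial
  induction hy using Submodule.span_induction with
  | mem u hu =>
    obtain ⟨lu, rfl⟩ := hu
    constructor
    · rw [← wordProd_append]
      obtain ⟨j, hj⟩ := hl
      exact Submodule.subset_span ⟨lu ++ l, ⟨j, hj.trans (List.suffix_append lu l).isInfix⟩, rfl⟩
    · rw [← wordProd_append]
      obtain ⟨j, hj⟩ := hl
      exact Submodule.subset_span ⟨l ++ lu, ⟨j, hj.trans (List.prefix_append l lu).isInfix⟩, rfl⟩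
  | zero => simp only [zero_mul, mul_zero]; exact ⟨zero_mem _, zero_mem _⟩
  | add y z _ _ hy hz =>
    rw [add_mul, mul_add]
    exact ⟨add_mem hy.1 hz.1, add_mem hy.2 hz.2⟩
  | smul c y _ hy =>
    rw [smul_mul_assoc, mul_smul_comm]
    exact ⟨Submodule.smul_mem _ _ hy.1, Submodule.smul_mem _ _ hy.2⟩

lemma Bspan_mul_mem {x : FreeAlgebra ℂ (Fin N)} (hx : x ∈ Bspan w) (y : FreeAlgebra ℂ (Fin N)) :
    y * x ∈ Bspan w ∧ x * y ∈ Bspan w := by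
  induction hx using Submodule.span_induction with
  | mem u hu =>
    obtain ⟨l, hl, rfl⟩ := hu
    exact word_mul_mem_Bspan w hl y
  | zero => simp only [mul_zero, zero_mul]; exact ⟨zero_mem _, zero_mem _⟩
  | add a b _ _ ha hb =>
    rw [mul_add, add_mul]
    exact ⟨add_mem ha.1 hb.1, add_mem ha.2 hb.2⟩
  | smul c a _ ha =>
    rw [mul_smul_comm, smul_mul_assoc]
    exact ⟨Submodule.smul_mem _ _ ha.1, Submodule.smul_mem _ _ ha.2⟩

lemma rel_sub_mem {a b : FreeAlgebra ℂ (Fin N)} (h : RingQuot.Rel (mrel w) a b) :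
    a - b ∈ Bspan w := by
  induction h with
  | of h =>
    obtain ⟨⟨j, rfl⟩, rfl⟩ := h
    rw [sub_zero]
    exact Submodule.subset_span ⟨w j, ⟨j, List.infix_refl _⟩, rfl⟩
  | add_left _ ih => simpa [add_sub_add_right_eq_sub] using ih
  | mul_left _ ih => rw [← sub_mul]; exact (Bspan_mul_mem w ih _).2
  | mul_right _ ih => rw [← mul_sub]; exact (Bspan_mul_mem w ih _).1

lemma eqv_sub_mem {a b : FreeAlgebra ℂ (Fin N)}
    (h : Relation.EqvGen (RingQuot.Rel (mrel w)) a b) : a - b ∈ Bspan w := by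
  induction h with
  | rel a b h => exact rel_sub_mem w h
  | refl a => simp only [sub_self]; exact zero_mem (Bspan w)
  | symm a b _ ih => have := neg_mem ih; rwa [neg_sub] at this
  | trans a b c _ _ ih1 ih2 => have := add_mem ih1 ih2; rwa [sub_add_sub_cancel] at this

lemma ker_eq_Bspan :
    LinearMap.ker (RingQuot.mkAlgHom ℂ (mrel w)).toLinearMap = Bspan w := by
  apply le_antisymm
  · intro x hx
    rw [LinearMap.mem_ker, AlgHom.toLinearMap_apply] at hx
    have h0 : RingQuot.mkRingHom (mrel w) x = RingQuot.mkRingHom (mrel w) 0 := by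
      rw [← RingQuot.mkAlgHom_coe ℂ]
      simp only [RingHom.coe_coe, map_zero, hx]
    rw [RingQuot.mkRingHom_def] at h0
    have hq : Quot.mk (RingQuot.Rel (mrel w)) x = Quot.mk _ 0 :=
      congrArg RingQuot.toQuot h0
    have := eqv_sub_mem w (Quot.eqvGen_exact hq)
    simpa using this
  · rw [Bspan, Submodule.span_le]
    rintro x ⟨l, ⟨j, s, t, hst⟩, rfl⟩
    have hrel : mrel w (wordProd (w j)) 0 := ⟨⟨j, rfl⟩, rfl⟩
    have h0 : RingQuot.mkAlgHom ℂ (mrel w) (wordProd (w j)) = 0 := by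
      have := RingQuot.mkAlgHom_rel ℂ hrel
      simpa using this
    simp only [SetLike.mem_coe, LinearMap.mem_ker, AlgHom.toLinearMap_apply]
    rw [← hst, wordProd_append, wordProd_append, map_mul, map_mul, h0]
    simp

end Ker

section Dim

variable {N p : ℕ} (d : Fin N → ℕ) (w : Fin p → List (Fin N))

lemma image_words (P : List (Fin N) → Prop) :
    ⇑((Emap (X := Fin N)).toLinearEquiv.trans (MonoidAlgebra.coeffLinearEquiv ℂ)).toLinearMap '' {x | ∃ l, P l ∧ x = wordProd l}
      = (fun i => Finsupp.single i 1) '' (FreeMonoid.ofList '' {l | P l}) := by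
  ext x
  simp only [Set.mem_image, Set.mem_setOf_eq]
  constructor
  · rintro ⟨y, ⟨l, hl, rfl⟩, rfl⟩
    exact ⟨FreeMonoid.ofList l, ⟨l, hl, rfl⟩, by
      simp only [LinearEquiv.coe_toLinearMap, LinearEquiv.trans_apply, AlgEquiv.toLinearEquiv_apply,
        Emap_wordProd]; rfl⟩
  · rintro ⟨i, ⟨l, hl, rfl⟩, rfl⟩
    exact ⟨wordProd l, ⟨l, hl, rfl⟩, by
      simp only [LinearEquiv.coe_toLinearMap, LinearEquiv.trans_apply, AlgEquiv.toLinearEquiv_apply,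
        Emap_wordProd]; rfl⟩

lemma map_span_words (P : List (Fin N) → Prop) :
    Submodule.map ((Emap (X := Fin N)).toLinearEquiv.trans (MonoidAlgebra.coeffLinearEquiv ℂ)).toLinearMap
        (Submodule.span ℂ {x | ∃ l, P l ∧ x = wordProd l})
      = Finsupp.supported ℂ ℂ (FreeMonoid.ofList '' {l | P l}) := by
  rw [Submodule.map_span, image_words, Finsupp.supported_eq_span_single]

lemma finiteDimensional_supported {α : Type*} (s : Set α) (hs : s.Finite) :
    FiniteDimensional ℂ (Finsupp.supported ℂ ℂ s) := by
  haveI := hs.to_subtype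
  exact LinearEquiv.finiteDimensional (Finsupp.supportedEquivFinsupp (M := ℂ) (R := ℂ) s).symm

lemma finrank_supported_finite {α : Type*} (s : Set α) (hs : s.Finite) :
    Module.finrank ℂ (Finsupp.supported ℂ ℂ s) = s.ncard := by
  haveI := hs.fintype
  rw [(Finsupp.supportedEquivFinsupp (M := ℂ) (R := ℂ) s).finrank_eq,
    Module.finrank_finsupp_self, Set.ncard_eq_toFinset_card' s, Set.toFinset_card]

variable (hd : ∀ k, 1 ≤ d k)

include hd in
lemma finite_Sall (n : ℕ) : {l : List (Fin N) | (l.map d).sum = n}.Finite :=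
  (List.finite_length_le (Fin N) n).subset fun l hl => by
    have := length_le_wsum d hd l
    simp only [Set.mem_setOf_eq] at hl ⊢
    omega

theorem finrank_map_wt (n : ℕ) :
    Module.finrank ℂ
        (Submodule.map (RingQuot.mkAlgHom ℂ (mrel w)).toLinearMap (wt d n))
      = (goodF d w hd n).card := by
  classical
  set E := (Emap (X := Fin N)).toLinearEquiv.trans (MonoidAlgebra.coeffLinearEquiv ℂ) with hE
  set Sall : Set (List (Fin N)) := {l | (l.map d).sum = n} with hSall
  set Sbad : Set (List (Fin N)) := {l | ∃ j, w j <:+: l} with hSbad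
  have hWmap : Submodule.map E.toLinearMap (wt d n)
      = Finsupp.supported ℂ ℂ (FreeMonoid.ofList '' Sall) := map_span_words _
  have hBmap : Submodule.map E.toLinearMap (Bspan w)
      = Finsupp.supported ℂ ℂ (FreeMonoid.ofList '' Sbad) := map_span_words _
  have hSallF : Sall.Finite := finite_Sall d hd n
  have hInterF : (Sbad ∩ Sall).Finite := hSallF.subset Set.inter_subset_right
  have hinj : Function.Injective (FreeMonoid.ofList (α := Fin N)) :=
    FreeMonoid.ofList.injective
  -- finite dimensionality of wt d n
  haveI hfd1 : FiniteDimensional ℂ (Submodule.map E.toLinearMap (wt d n)) := by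
    rw [hWmap]; exact finiteDimensional_supported _ (hSallF.image (⇑FreeMonoid.ofList))
  haveI hfd : FiniteDimensional ℂ (wt d n) :=
    LinearEquiv.finiteDimensional (E.submoduleMap (wt d n)).symm
  -- rank-nullity
  set q := (RingQuot.mkAlgHom ℂ (mrel w)).toLinearMap with hq
  set g := q.comp (wt d n).subtype with hg
  have h1 : LinearMap.range g = Submodule.map q (wt d n) := by
    rw [hg, LinearMap.range_comp, Submodule.range_subtype]
  have h2 : LinearMap.ker g = Submodule.comap (wt d n).subtype (Bspan w ⊓ wt d n) := by
    rw [hg, LinearMap.ker_comp, ker_eq_Bspan]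
    ext x
    simp only [Submodule.mem_comap, Submodule.mem_inf]
    exact ⟨fun h => ⟨h, x.2⟩, fun h => h.1⟩
  have h3 : Module.finrank ℂ (LinearMap.ker g) = Module.finrank ℂ ↥(Bspan w ⊓ wt d n) := by
    rw [h2]
    exact (Submodule.comapSubtypeEquivOfLe inf_le_right).finrank_eq
  have h4 := LinearMap.finrank_range_add_finrank_ker g
  rw [h1, h3] at h4
  -- finrank of W
  have h5 : Module.finrank ℂ (wt d n) = Sall.ncard := by
    rw [← LinearEquiv.finrank_map_eq E (wt d n), hWmap]
    exact (finrank_supported_finite _ (hSallF.image (⇑FreeMonoid.ofList))).trans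
      (Set.ncard_image_of_injective _ hinj)
  -- finrank of B ⊓ W
  have h6 : Module.finrank ℂ ↥(Bspan w ⊓ wt d n) = (Sbad ∩ Sall).ncard := by
    have hminf : Submodule.map E.toLinearMap (Bspan w ⊓ wt d n)
        = Finsupp.supported ℂ ℂ (FreeMonoid.ofList '' (Sbad ∩ Sall)) := by
      rw [Submodule.map_inf E.toLinearMap E.injective, hWmap, hBmap, ← Finsupp.supported_inter,
        Set.image_inter hinj]
    rw [← LinearEquiv.finrank_map_eq E, hminf]
    exact (finrank_supported_finite _ (hInterF.image (⇑FreeMonoid.ofList))).trans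
      (Set.ncard_image_of_injective _ hinj)
  -- counting
  have hcount : Sall.ncard = (goodF d w hd n).card + (Sbad ∩ Sall).ncard := by
    have hgood : (goodF d w hd n).card = ({l | (l.map d).sum = n ∧ NGood w l} : Set _).ncard :=
      (Set.ncard_eq_toFinset_card _ (finite_wsum d hd (NGood w) n)).symm
    have hsplit : Sall = {l | (l.map d).sum = n ∧ NGood w l} ∪ (Sbad ∩ Sall) := by
      ext l
      simp only [hSall, hSbad, Set.mem_setOf_eq, Set.mem_union, Set.mem_inter_iff]
      constructor
      · intro hl
        by_cases hb : NGood w l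
        · exact Or.inl ⟨hl, hb⟩
        · rw [NGood, not_forall] at hb
          obtain ⟨j, hj⟩ := hb
          rw [not_not] at hj
          exact Or.inr ⟨⟨j, hj⟩, hl⟩
      · rintro (⟨hl, -⟩ | ⟨-, hl⟩) <;> exact hl
    have hdisj : Disjoint ({l | (l.map d).sum = n ∧ NGood w l} : Set _) (Sbad ∩ Sall) := by
      rw [Set.disjoint_left]
      rintro l ⟨-, hg⟩ ⟨⟨j, hj⟩, -⟩
      exact hg j hj
    conv_lhs => rw [hsplit]
    rw [Set.ncard_union_eq hdisj (finite_wsum d hd (NGood w) n) hInterF, hgood]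
  have hfr : Module.finrank ℂ (Submodule.map q (wt d n)) + (Sbad ∩ Sall).ncard
      = (goodF d w hd n).card + (Sbad ∩ Sall).ncard := by
    rw [← h6, h4, h5, hcount, h6]
  exact Nat.add_right_cancel hfr

end Dim

theorem stmt_14 (N p : ℕ) (d : Fin N → ℕ) (hd : ∀ k, 1 ≤ d k)
    (w : Fin p → List (Fin N)) (hw : ∀ j, w j ≠ []) (hno : PairwiseNonOverlapping w) :
    (PowerSeries.mk fun m =>
        (Module.finrank ℂ
          (Submodule.map
            (RingQuot.mkAlgHom ℂ
              (fun a b : FreeAlgebra ℂ (Fin N) => (∃ j, a = wordProd (w j)) ∧ b = 0)).toLinearMap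
            (wt d m)) : ℤ)) *
      (1 - ∑ k : Fin N, PowerSeries.X ^ (d k)
         + ∑ j : Fin p, PowerSeries.X ^ (((w j).map d).sum))
      = 1 := by
  classical
  have hno' : PairwiseNonOverlapping w := hno
  have hA : (PowerSeries.mk fun m =>
        (Module.finrank ℂ
          (Submodule.map
            (RingQuot.mkAlgHom ℂ
              (fun a b : FreeAlgebra ℂ (Fin N) => (∃ j, a = wordProd (w j)) ∧ b = 0)).toLinearMap
            (wt d m)) : ℤ))
      = PowerSeries.mk (fun m => ((goodF d w hd m).card : ℤ)) := by
    apply congrArg PowerSeries.mk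
    funext m
    exact_mod_cast congrArg (Nat.cast (R := ℤ)) (finrank_map_wt d w hd m)
  rw [hA]
  apply PowerSeries.ext
  intro n
  rw [mul_add, mul_sub, mul_one, Finset.mul_sum, Finset.mul_sum, map_add, map_sub, map_sum,
    map_sum, PowerSeries.coeff_one, PowerSeries.coeff_mk]
  have hc1 : ∀ k : Fin N, (PowerSeries.coeff n)
      ((PowerSeries.mk fun m => ((goodF d w hd m).card : ℤ)) * PowerSeries.X ^ (d k))
      = if d k ≤ n then ((goodF d w hd (n - d k)).card : ℤ) else 0 := by
    intro k
    rw [PowerSeries.coeff_mul_X_pow', PowerSeries.coeff_mk]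
  have hc2 : ∀ j : Fin p, (PowerSeries.coeff n)
      ((PowerSeries.mk fun m => ((goodF d w hd m).card : ℤ))
          * PowerSeries.X ^ (((w j).map d).sum))
      = if ((w j).map d).sum ≤ n then ((goodF d w hd (n - ((w j).map d).sum)).card : ℤ)
          else 0 := by
    intro j
    rw [PowerSeries.coeff_mul_X_pow', PowerSeries.coeff_mk]
  rw [Finset.sum_congr rfl fun k _ => hc1 k, Finset.sum_congr rfl fun j _ => hc2 j]
  have hkey := comb_key d w hd hw hno' n
  have hkeyZ : ((goodF d w hd n).card : ℤ)
        + ∑ j : Fin p, (if ((w j).map d).sum ≤ n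
            then ((goodF d w hd (n - ((w j).map d).sum)).card : ℤ) else 0)
      = ∑ k : Fin N, (if d k ≤ n then ((goodF d w hd (n - d k)).card : ℤ) else 0)
        + (if n = 0 then 1 else 0) := by
    exact_mod_cast congrArg (Nat.cast (R := ℤ)) hkey
  push_cast at hkeyZ ⊢
  linarith [hkeyZ]
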